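/- arXiv:1106.2579 — 7 statements merged into one kernel-verified Lean document; each statement's English description precedes it below -/
import Mathlib

section
/- Let N be a bounded normal operator in a Krein space (H,[·,·]) (i.e. N commutes with its Krein adjoint N⁺ = J N* J). The set σ₊(N) of spectral points of positive type is open in the approximate point spectrum σ_ap(N): if λ ∈ σ₊(N), there is ε > 0 such that every μ ∈ σ_ap(N) with |μ - λ| < ε belongs to σ₊(N). -/
open Filter Topology ContinuousLinearMap

noncomputable section

variable {H : Type*} [NormedAddCommGroup H] [InnerProductSpace ℂ H] [CompleteSpace H]

def kadj (J T : H →L[ℂ] H) : H →L[ℂ] H := J ∘L (ContinuousLinearMap.adjoint T) ∘L J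

def ApproxEig (T : H →L[ℂ] H) (l : ℂ) (x : ℕ → H) : Prop :=
  (∀ n, ‖x n‖ = 1) ∧ Tendsto (fun n => T (x n) - l • x n) atTop (nhds 0)

def approxSpec (T : H →L[ℂ] H) : Set ℂ := {l | ∃ x : ℕ → H, ApproxEig T l x}

def posType (J T : H →L[ℂ] H) : Set ℂ :=
  {l | l ∈ approxSpec T ∧ ∀ x : ℕ → H, ApproxEig T l x →
      0 < Filter.liminf (fun n => (inner ℂ (J (x n)) (x n) : ℂ).re) Filter.atTop}

theorem posType_isOpen_in_approxSpec (J N : H →L[ℂ] H)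
    (hJ : ContinuousLinearMap.adjoint J = J) (hJ2 : J ∘L J = 1)
    (hN : N ∘L kadj J N = kadj J N ∘L N)
    (l : ℂ) (hl : l ∈ posType J N) :
    ∃ ε > 0, ∀ μ ∈ approxSpec N, ‖μ - l‖ < ε → μ ∈ posType J N := by
  by_contra h
  push_neg at h
  have key : ∀ k : ℕ, ∃ y : H, ‖y‖ = 1 ∧ ‖N y - l • y‖ < 2 / (k + 1) ∧
      (inner ℂ (J y) y : ℂ).re < 1 / (k + 1) := by
    intro k
    have hkpos : (0 : ℝ) < 1 / (k + 1) := by positivity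
    obtain ⟨μ, hμap, hμl, hμnot⟩ := h (1 / (k + 1)) hkpos
    simp only [posType, Set.mem_setOf_eq, not_and, not_forall] at hμnot
    obtain ⟨x, hx, hlim⟩ := hμnot hμap
    push_neg at hlim
    have hfreq : ∃ᶠ n in atTop, (inner ℂ (J (x n)) (x n) : ℂ).re < 1 / (k + 1) := by
      refine frequently_lt_of_liminf_lt ?_ (lt_of_le_of_lt hlim hkpos)
      refine IsBoundedUnder.isCoboundedUnder_ge (isBoundedUnder_of ⟨‖J‖, fun n => ?_⟩)
      have h1 : |(inner ℂ (J (x n)) (x n) : ℂ).re| ≤ ‖J‖ := by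
        calc |(inner ℂ (J (x n)) (x n) : ℂ).re| ≤ ‖(inner ℂ (J (x n)) (x n) : ℂ)‖ :=
              Complex.abs_re_le_norm _
          _ ≤ ‖J (x n)‖ * ‖x n‖ := norm_inner_le_norm _ _
          _ ≤ (‖J‖ * ‖x n‖) * ‖x n‖ := by gcongr; exact J.le_opNorm _
          _ = ‖J‖ := by rw [hx.1 n]; ring
      linarith [le_abs_self ((inner ℂ (J (x n)) (x n) : ℂ).re)]
    have hev : ∀ᶠ n in atTop, ‖N (x n) - μ • x n‖ < 1 / (k + 1) := by
      have := hx.2 (Metric.ball_mem_nhds (0 : H) hkpos)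
      filter_upwards [this] with n hn
      simpa [mem_ball_zero_iff] using hn
    obtain ⟨n, hn1, hn2⟩ := (hev.and_frequently hfreq).exists
    refine ⟨x n, hx.1 n, ?_, hn2⟩
    have heq : N (x n) - l • x n = (N (x n) - μ • x n) + (μ - l) • x n := by
      rw [sub_smul]; abel
    calc ‖N (x n) - l • x n‖ ≤ ‖N (x n) - μ • x n‖ + ‖(μ - l) • x n‖ := by
          rw [heq]; exact norm_add_le _ _
      _ = ‖N (x n) - μ • x n‖ + ‖μ - l‖ := by rw [norm_smul, hx.1 n, mul_one]
      _ < 1 / (k + 1) + 1 / (k + 1) := by exact add_lt_add hn1 hμl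
      _ = 2 / (k + 1) := by ring
  choose y hy1 hy2 hy3 using key
  have htend0 : Tendsto (fun k : ℕ => (2 : ℝ) / (k + 1)) atTop (nhds 0) := by
    have := tendsto_one_div_add_atTop_nhds_zero_nat.const_mul (2 : ℝ)
    simpa [div_eq_mul_inv, mul_comm] using this
  have htend : Tendsto (fun k => N (y k) - l • y k) atTop (nhds 0) := by
    rw [tendsto_zero_iff_norm_tendsto_zero]
    exact squeeze_zero (fun k => norm_nonneg _) (fun k => (hy2 k).le) htend0
  have hpos := hl.2 y ⟨hy1, htend⟩
  have hle : Filter.liminf (fun k => (inner ℂ (J (y k)) (y k) : ℂ).re) Filter.atTop ≤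
      Filter.liminf (fun k : ℕ => (1 : ℝ) / (k + 1)) Filter.atTop := by
    refine liminf_le_liminf (Filter.Eventually.of_forall fun k => (hy3 k).le) ?_ ?_
    · refine isBoundedUnder_of ⟨-‖J‖, fun k => ?_⟩
      have h1 : |(inner ℂ (J (y k)) (y k) : ℂ).re| ≤ ‖J‖ := by
        calc |(inner ℂ (J (y k)) (y k) : ℂ).re| ≤ ‖(inner ℂ (J (y k)) (y k) : ℂ)‖ :=
              Complex.abs_re_le_norm _
          _ ≤ ‖J (y k)‖ * ‖y k‖ := norm_inner_le_norm _ _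
          _ ≤ (‖J‖ * ‖y k‖) * ‖y k‖ := by gcongr; exact J.le_opNorm _
          _ = ‖J‖ := by rw [hy1 k]; ring
      linarith [neg_abs_le ((inner ℂ (J (y k)) (y k) : ℂ).re)]
    · refine IsBoundedUnder.isCoboundedUnder_ge (isBoundedUnder_of ⟨1, fun k => ?_⟩)
      rw [div_le_one (by positivity)]; linarith [Nat.cast_nonneg (α := ℝ) k]
  rw [tendsto_one_div_add_atTop_nhds_zero_nat.liminf_eq] at hle
  linarith
end
end

section
/- Let N be a bounded normal operator in a Krein space and Q a bounded projection on H such that every bounded operator B commuting with N also commutes with Q. Then Q is normal with respect to the Krein adjoint, i.e. Q Q⁺ = Q⁺ Q where Q⁺ = J Q* J. -/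
open Filter Topology ContinuousLinearMap

noncomputable section

variable {H : Type*} [NormedAddCommGroup H] [InnerProductSpace ℂ H] [CompleteSpace H]

lemma kadj_comp (J : H →L[ℂ] H) (hJ2 : J ∘L J = 1) (A B : H →L[ℂ] H) :
    kadj J (A ∘L B) = kadj J B ∘L kadj J A := by
  simp only [kadj, ContinuousLinearMap.adjoint_comp]
  calc J ∘L (adjoint B ∘L adjoint A) ∘L J
      = J ∘L adjoint B ∘L (J ∘L J) ∘L adjoint A ∘L J := by rw [hJ2]; ext x; simp
    _ = (J ∘L adjoint B ∘L J) ∘L (J ∘L adjoint A ∘L J) := by ext x; simp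

lemma kadj_kadj (J : H →L[ℂ] H) (hJ : ContinuousLinearMap.adjoint J = J)
    (hJ2 : J ∘L J = 1) (T : H →L[ℂ] H) : kadj J (kadj J T) = T := by
  simp only [kadj, ContinuousLinearMap.adjoint_comp, ContinuousLinearMap.adjoint_adjoint, hJ]
  calc J ∘L (J ∘L T ∘L J) ∘L J = (J ∘L J) ∘L T ∘L (J ∘L J) := by ext x; simp
    _ = T := by rw [hJ2]; ext x; simp

theorem proj_normal (J N Q : H →L[ℂ] H)
    (hJ : ContinuousLinearMap.adjoint J = J) (hJ2 : J ∘L J = 1)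
    (hN : N ∘L kadj J N = kadj J N ∘L N)
    (hQ : Q ∘L Q = Q)
    (hcomm : ∀ B : H →L[ℂ] H, N ∘L B = B ∘L N → Q ∘L B = B ∘L Q) :
    Q ∘L kadj J Q = kadj J Q ∘L Q := by
  have h1 : Q ∘L kadj J N = kadj J N ∘L Q := hcomm _ hN
  have h2 : kadj J (Q ∘L kadj J N) = kadj J (kadj J N ∘L Q) := by rw [h1]
  rw [kadj_comp J hJ2, kadj_comp J hJ2, kadj_kadj J hJ hJ2] at h2
  exact hcomm _ h2
end
end

section
/- Let N be a bounded normal operator in a Krein space and let λ ∈ σ₊(N) be a spectral point of positive type. Then every approximate eigensequence for N - λ is also an approximate eigensequence for N⁺ - λ̄: if ‖x_n‖ = 1 and (N - λ)x_n → 0, then (N⁺ - λ̄)x_n → 0. -/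
open Filter Topology ContinuousLinearMap

noncomputable section

variable {H : Type*} [NormedAddCommGroup H] [InnerProductSpace ℂ H] [CompleteSpace H]

theorem approxEig_kreinAdjoint_of_posType (J N : H →L[ℂ] H)
    (hJ : ContinuousLinearMap.adjoint J = J) (hJ2 : J ∘L J = 1)
    (hN : N ∘L kadj J N = kadj J N ∘L N)
    (l : ℂ) (hl : l ∈ posType J N)
    (x : ℕ → H) (hx : ApproxEig N l x) :
    Tendsto (fun n => kadj J N (x n) - (starRingEnd ℂ) l • x n) atTop (nhds 0) := by
  classical
  set c : ℂ := (starRingEnd ℂ) l with hc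
  set Np : H →L[ℂ] H := kadj J N with hNp
  set A : H →L[ℂ] H := N - l • 1 with hA
  set B : H →L[ℂ] H := Np - c • 1 with hB
  have hJJ : ∀ v : H, J (J v) = v := by
    intro v
    have := ContinuousLinearMap.ext_iff.mp hJ2 v
    simpa using this
  have hA_apply : ∀ v, A v = N v - l • v := by intro v; simp [hA]
  have hB_apply : ∀ v, B v = Np v - c • v := by intro v; simp [hB]
  -- adjoints
  have hadjA : ContinuousLinearMap.adjoint A = ContinuousLinearMap.adjoint N - c • 1 := by
    rw [← ContinuousLinearMap.star_eq_adjoint, hA, star_sub, star_smul, star_one,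
      ContinuousLinearMap.star_eq_adjoint, hc, RCLike.star_def]
  have hadjNp : ContinuousLinearMap.adjoint Np = J ∘L N ∘L J := by
    rw [hNp]
    simp [kadj, ContinuousLinearMap.adjoint_comp, hJ, ContinuousLinearMap.adjoint_adjoint,
      ContinuousLinearMap.comp_assoc]
  have hadjB : ContinuousLinearMap.adjoint B = (J ∘L N ∘L J) - l • 1 := by
    rw [← ContinuousLinearMap.star_eq_adjoint, hB, star_sub, star_smul, star_one,
      ContinuousLinearMap.star_eq_adjoint, hadjNp]
    simp [hc]
  -- commutation
  have hNcomm : ∀ v, N (Np v) = Np (N v) := by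
    intro v
    have := ContinuousLinearMap.ext_iff.mp hN v
    simpa [hNp] using this
  have hABcomm : ∀ v, A (B v) = B (A v) := by
    intro v
    simp only [hA_apply, hB_apply, map_sub, map_smul, hNcomm v, smul_sub, smul_smul]
    ring_nf
    rw [mul_comm l c]
    abel
  -- pointwise identities
  have hJB : ∀ v, J (B v) = ContinuousLinearMap.adjoint A (J v) := by
    intro v
    have h1 : J (Np v) = ContinuousLinearMap.adjoint N (J v) := by
      simp [hNp, kadj, hJJ]
    simp [hB_apply, hadjA, map_sub, map_smul, h1]
  have hJA : ∀ v, J (A v) = ContinuousLinearMap.adjoint B (J v) := by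
    intro v
    simp [hA_apply, hadjB, map_sub, map_smul, hJJ]
  have hkey : ∀ v, (inner ℂ (J (B v)) (B v) : ℂ) = inner ℂ (J (A v)) (A v) := by
    intro v
    have h1 : (inner ℂ (J (B v)) (B v) : ℂ) = inner ℂ (J v) (A (B v)) := by
      rw [hJB v, ContinuousLinearMap.adjoint_inner_left]
    have h2 : (inner ℂ (J (A v)) (A v) : ℂ) = inner ℂ (J v) (B (A v)) := by
      rw [hJA v, ContinuousLinearMap.adjoint_inner_left]
    rw [h1, h2, hABcomm v]
  -- sequences
  set w : ℕ → H := fun n => A (x n) with hwdef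
  set y : ℕ → H := fun n => B (x n) with hydef
  have hw : Tendsto w atTop (nhds 0) := by
    have := hx.2
    simpa [hwdef, hA_apply] using this
  have hBw : Tendsto (fun n => B (w n)) atTop (nhds 0) := by
    have := (B.continuous.tendsto 0).comp hw
    simpa [Function.comp_def] using this
  have hgoal_eq : (fun n => kadj J N (x n) - (starRingEnd ℂ) l • x n) = y := by
    funext n
    simp [hydef, hB_apply, hNp, hc]
  rw [hgoal_eq]
  by_contra hcon
  -- extract a subsequence bounded below in norm
  have hfreq : ∃ ε > (0:ℝ), ∃ᶠ n in atTop, ε ≤ ‖y n‖ := by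
    rw [Metric.tendsto_atTop] at hcon
    push_neg at hcon
    obtain ⟨ε, hε, hcon⟩ := hcon
    refine ⟨ε, hε, Filter.frequently_atTop.mpr fun a => ?_⟩
    obtain ⟨n, hn, h⟩ := hcon a
    exact ⟨n, hn, by simpa [dist_eq_norm] using h⟩
  obtain ⟨ε, hε, hfreq⟩ := hfreq
  obtain ⟨φ, hφ, hφε⟩ := Filter.extraction_of_frequently_atTop hfreq
  have hypos : ∀ k, (0:ℝ) < ‖y (φ k)‖ := fun k => lt_of_lt_of_le hε (hφε k)
  set z : ℕ → H := fun k => (‖y (φ k)‖)⁻¹ • y (φ k) with hzdef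
  have hz_norm : ∀ k, ‖z k‖ = 1 := by
    intro k
    simp only [hzdef, norm_smul, norm_inv, norm_norm]
    exact inv_mul_cancel₀ (hypos k).ne'
  have hinv_le : ∀ k, (‖y (φ k)‖)⁻¹ ≤ ε⁻¹ := fun k =>
    inv_anti₀ hε (hφε k)
  have hAy : ∀ n, A (y n) = B (w n) := by
    intro n
    simp only [hydef, hwdef]
    exact hABcomm (x n)
  have hz_tend : Tendsto (fun k => N (z k) - l • z k) atTop (nhds 0) := by
    have heq : ∀ k, N (z k) - l • z k = (‖y (φ k)‖)⁻¹ • B (w (φ k)) := by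
      intro k
      rw [← hAy (φ k), hzdef]
      simp only [hA_apply, map_smul, ContinuousLinearMap.map_smul_of_tower, smul_sub, smul_comm l]
    have hb : Tendsto (fun k => ε⁻¹ * ‖B (w (φ k))‖) atTop (nhds 0) := by
      have h0 : Tendsto (fun k => B (w (φ k))) atTop (nhds 0) :=
        hBw.comp hφ.tendsto_atTop
      simpa using (h0.norm.const_mul ε⁻¹)
    refine squeeze_zero_norm (fun k => ?_) hb
    rw [heq k, norm_smul, norm_inv, norm_norm]
    exact mul_le_mul_of_nonneg_right (hinv_le k) (norm_nonneg _)
  have hliminf := hl.2 z ⟨hz_norm, hz_tend⟩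
  -- but the Krein inner products of z tend to 0
  have hinner_y : ∀ n, (inner ℂ (J (y n)) (y n) : ℂ).re = (inner ℂ (J (w n)) (w n) : ℂ).re := by
    intro n
    simp only [hydef, hwdef]
    rw [hkey (x n)]
  have hinner_w : Tendsto (fun n => (inner ℂ (J (w n)) (w n) : ℂ).re) atTop (nhds 0) := by
    have hcont : Continuous fun v : H => (inner ℂ (J v) v : ℂ).re :=
      Complex.continuous_re.comp ((J.continuous.inner continuous_id))
    have := (hcont.tendsto 0).comp hw
    simpa [Function.comp_def] using this
  have hinner_z : ∀ k, (inner ℂ (J (z k)) (z k) : ℂ).re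
      = (‖y (φ k)‖)⁻¹ * ((‖y (φ k)‖)⁻¹ * (inner ℂ (J (y (φ k))) (y (φ k)) : ℂ).re) := by
    intro k
    simp only [hzdef, ContinuousLinearMap.map_smul_of_tower,
      RCLike.real_smul_eq_coe_smul (K := ℂ)]
    rw [inner_smul_left, inner_smul_right]
    simp [Complex.mul_re]
  have hz_inner_tend : Tendsto (fun k => (inner ℂ (J (z k)) (z k) : ℂ).re) atTop (nhds 0) := by
    have hb : Tendsto (fun k => ε⁻¹ * (ε⁻¹ * |(inner ℂ (J (w (φ k))) (w (φ k)) : ℂ).re|)) atTop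
        (nhds 0) := by
      have h0 := hinner_w.comp hφ.tendsto_atTop
      have := (h0.abs.const_mul ε⁻¹).const_mul ε⁻¹
      simpa using this
    refine squeeze_zero_norm (fun k => ?_) hb
    rw [hinner_z k, hinner_y (φ k), Real.norm_eq_abs, abs_mul, abs_mul,
      abs_of_nonneg (inv_nonneg.mpr (norm_nonneg (y (φ k))))]
    have h2 : (0:ℝ) ≤ (‖y (φ k)‖)⁻¹ := inv_nonneg.mpr (norm_nonneg _)
    have h3 : (0:ℝ) ≤ |(inner ℂ (J (w (φ k))) (w (φ k)) : ℂ).re| := abs_nonneg _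
    exact mul_le_mul (hinv_le k) (mul_le_mul_of_nonneg_right (hinv_le k) h3)
      (mul_nonneg h2 h3) (inv_nonneg.mpr hε.le)
  rw [hz_inner_tend.liminf_eq] at hliminf
  exact lt_irrefl 0 hliminf
end
end

section
/- Let N be a bounded normal operator in a Krein space and λ ∈ σ₊(N). Then ker(N - λ) ⊆ ker(N⁺ - λ̄). -/
open Filter Topology ContinuousLinearMap

noncomputable section

variable {H : Type*} [NormedAddCommGroup H] [InnerProductSpace ℂ H] [CompleteSpace H]

theorem ker_subset_ker_kreinAdjoint (J N : H →L[ℂ] H)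
    (hJ : ContinuousLinearMap.adjoint J = J) (hJ2 : J ∘L J = 1)
    (hN : N ∘L kadj J N = kadj J N ∘L N)
    (l : ℂ) (hl : l ∈ posType J N) :
    ∀ x : H, N x = l • x → kadj J N x = (starRingEnd ℂ) l • x := by
  intro x hx
  have hJJ : ∀ v : H, J (J v) = v := by
    intro v
    have := ContinuousLinearMap.ext_iff.mp hJ2 v
    simpa using this
  set y : H := kadj J N x - (starRingEnd ℂ) l • x with hy
  -- [y, z] = 0 for all z with N z = l • z
  have hJy : ∀ z : H, N z = l • z → (inner ℂ (J y) z : ℂ) = 0 := by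
    intro z hz
    have h1 : J (kadj J N x) = ContinuousLinearMap.adjoint N (J x) := by
      simp [kadj, hJJ]
    have : (inner ℂ (J y) z : ℂ)
        = inner ℂ (ContinuousLinearMap.adjoint N (J x)) z
          - inner ℂ ((starRingEnd ℂ) l • J x) z := by
      simp [hy, h1, inner_sub_left, map_smul]
    rw [this, ContinuousLinearMap.adjoint_inner_left, hz, inner_smul_left,
      inner_smul_right, Complex.conj_conj]
    ring
  -- N y = l • y
  have hNy : N y = l • y := by
    have h1 : N (kadj J N x) = l • kadj J N x := by
      have := ContinuousLinearMap.ext_iff.mp hN x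
      simp only [ContinuousLinearMap.comp_apply] at this
      rw [this, hx, map_smul]
    simp [hy, h1, map_smul, hx, smul_sub, smul_comm l]
  -- show y = 0
  have hy0 : y = 0 := by
    by_contra h0
    set c : ℝ := ‖y‖⁻¹ with hc
    set u : H := c • y with hu
    have hnu : ‖u‖ = 1 := by
      rw [hu, norm_smul, hc]
      simp [norm_ne_zero_iff.mpr h0, inv_mul_cancel₀ (norm_ne_zero_iff.mpr h0)]
    have happ : ApproxEig N l (fun _ => u) := by
      refine ⟨fun _ => hnu, ?_⟩
      have : (fun _ : ℕ => N u - l • u) = fun _ => (0 : H) := by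
        funext n
        rw [hu, map_smul_of_tower, hNy, smul_comm, sub_self]
      rw [this]
      exact tendsto_const_nhds
    have hpos := hl.2 (fun _ => u) happ
    have hyy : (inner ℂ (J y) y : ℂ) = 0 := hJy y hNy
    have huu : (inner ℂ (J u) u : ℂ) = 0 := by
      have hcs : ∀ v : H, c • v = (c : ℂ) • v := fun v => (algebraMap_smul ℂ c v).symm
      rw [hu, map_smul_of_tower, hcs, hcs, inner_smul_left, inner_smul_right, hyy]
      simp
    rw [Filter.liminf_const, huu] at hpos
    simp at hpos
  have := sub_eq_zero.mp hy0
  exact this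
end
end

section
/- Let N be a bounded normal operator in a Krein space and λ ∈ σ₊(N). Then λ has no Jordan chains of length greater than one: if (N - λ)x = 0 and (N - λ)u = x, then x = 0. Equivalently, the root subspace of N at λ equals ker(N - λ). -/
open Filter Topology ContinuousLinearMap

noncomputable section

variable {H : Type*} [NormedAddCommGroup H] [InnerProductSpace ℂ H] [CompleteSpace H]

lemma eig_pos_of_posType (J N : H →L[ℂ] H) (l : ℂ) (hl : l ∈ posType J N)
    (v : H) (hv : v ≠ 0) (hNv : N v = l • v) :
    0 < (inner ℂ (J v) v : ℂ).re := by
  have hnorm : ‖v‖ ≠ 0 := norm_ne_zero_iff.mpr hv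
  set c : ℂ := ((‖v‖⁻¹ : ℝ) : ℂ) with hc
  have hx : ApproxEig N l (fun _ => c • v) := by
    constructor
    · intro n
      simp only [norm_smul, hc, Complex.norm_real, Real.norm_eq_abs,
        abs_of_nonneg (inv_nonneg.mpr (norm_nonneg v))]
      field_simp
    · have : (fun _ : ℕ => N (c • v) - l • (c • v)) = fun _ => 0 := by
        funext n
        rw [map_smul, hNv, smul_comm]
        simp
      rw [this]
      exact tendsto_const_nhds
  have h := hl.2 _ hx
  rw [Filter.liminf_const] at h
  have hinner : (inner ℂ (J (c • v)) (c • v) : ℂ) =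
      ((‖v‖⁻¹ : ℝ) : ℂ) * (((‖v‖⁻¹ : ℝ) : ℂ) * inner ℂ (J v) v) := by
    rw [map_smul, inner_smul_left, inner_smul_right, hc]
    simp [Complex.conj_ofReal]
  rw [hinner] at h
  simp only [Complex.re_ofReal_mul] at h
  have h2 : (0:ℝ) < ‖v‖⁻¹ := inv_pos.mpr (lt_of_le_of_ne (norm_nonneg v) (Ne.symm hnorm))
  nlinarith [h, h2, mul_pos h2 h2]

theorem no_jordan_chain_of_posType (J N : H →L[ℂ] H)
    (hJ : ContinuousLinearMap.adjoint J = J) (hJ2 : J ∘L J = 1)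
    (hN : N ∘L kadj J N = kadj J N ∘L N)
    (l : ℂ) (hl : l ∈ posType J N) :
    ∀ x u : H, N x = l • x → N u - l • u = x → x = 0 := by
  intro x u hx hu
  by_contra hx0
  set M := kadj J N with hM
  have hJJ : ∀ w : H, J (J w) = w := by
    intro w
    have := ContinuousLinearMap.ext_iff.mp hJ2 w
    simpa using this
  have hcomm : ∀ w : H, N (M w) = M (N w) := by
    intro w
    have := ContinuousLinearMap.ext_iff.mp hN w
    simpa using this
  have hid : ∀ a b : H, (inner ℂ (J (N a)) b : ℂ) = inner ℂ (J a) (M b) := by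
    intro a b
    have hMb : M b = J (ContinuousLinearMap.adjoint N (J b)) := rfl
    rw [hMb]
    calc (inner ℂ (J (N a)) b : ℂ)
        = inner ℂ (ContinuousLinearMap.adjoint J (N a)) b := by rw [hJ]
      _ = inner ℂ (N a) (J b) := ContinuousLinearMap.adjoint_inner_left J _ _
      _ = inner ℂ a (ContinuousLinearMap.adjoint N (J b)) :=
            (ContinuousLinearMap.adjoint_inner_right N _ _).symm
      _ = inner ℂ (J (J a)) (ContinuousLinearMap.adjoint N (J b)) := by rw [hJJ]
      _ = inner ℂ (ContinuousLinearMap.adjoint J (J a)) (ContinuousLinearMap.adjoint N (J b)) := by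
            rw [hJ]
      _ = inner ℂ (J a) (J (ContinuousLinearMap.adjoint N (J b))) :=
            ContinuousLinearMap.adjoint_inner_left J _ _
  -- v := M x - conj l • x is an eigenvector of N with [v,v] = 0, hence v = 0
  set lb := starRingEnd ℂ l with hlb
  set v : H := M x - lb • x with hv
  have hNv : N v = l • v := by
    rw [hv, map_sub, hcomm, hx, map_smul, map_smul, hx, smul_sub, smul_comm]
  have hvMx : (inner ℂ (J v) (M x) : ℂ) = lb * inner ℂ (J v) x := by
    rw [← hid, hNv, map_smul, inner_smul_left]
  have hvv : (inner ℂ (J v) v : ℂ) = 0 := by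
    rw [hv]
    rw [inner_sub_right, hvMx, inner_smul_right]
    ring
  have hv0 : v = 0 := by
    by_contra hv0
    have := eig_pos_of_posType J N l hl v hv0 hNv
    rw [hvv] at this
    simp at this
  have hMx : M x = lb • x := sub_eq_zero.mp hv0
  have hxx : (inner ℂ (J x) x : ℂ) = 0 := by
    calc (inner ℂ (J x) x : ℂ) = inner ℂ (J (N u - l • u)) x := by rw [hu]
      _ = inner ℂ (J (N u)) x - lb * inner ℂ (J u) x := by
          rw [map_sub, inner_sub_left, map_smul, inner_smul_left]
      _ = inner ℂ (J u) (M x) - lb * inner ℂ (J u) x := by rw [hid]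
      _ = 0 := by rw [hMx, inner_smul_right]; ring
  have hpos := eig_pos_of_posType J N l hl x hx0 hx
  rw [hxx] at hpos
  simp at hpos
end
end

section
/- Rosenblum's Corollary: Let X, Y be complex Banach spaces, S a bounded operator on X and T a bounded operator on Y with σ(S) ∩ σ(T) = ∅. Then for every bounded operator Z : Y → X there is a unique bounded X-valued solution of SX₀ - X₀T = Z; in particular, if a bounded operator W : Y → X satisfies SW = WT, then W = 0. -/
open ContinuousLinearMap

/-- For commuting elements of a complex Banach algebra with disjoint spectra,
the difference is invertible. -/
lemma commuting_sub_isUnit {A : Type*} [NormedRing A] [NormedAlgebra ℂ A] [CompleteSpace A]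
    (a b : A) (hab : a * b = b * a)
    (hdisj : ∀ z : ℂ, z ∈ spectrum ℂ a → z ∈ spectrum ℂ b → False) :
    IsUnit (a - b) := by
  by_contra hne
  set C : Subalgebra ℂ A := Subalgebra.centralizer ℂ {a, b} with hC
  set B : Subalgebra ℂ A := Subalgebra.centralizer ℂ (C : Set A) with hB
  have haC : a ∈ C := (Subalgebra.mem_centralizer_iff ℂ).mpr (by
    rintro g hg
    rcases hg with rfl | rfl
    · rfl
    · exact hab.symm)
  have hbC : b ∈ C := (Subalgebra.mem_centralizer_iff ℂ).mpr (by
    rintro g hg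
    rcases hg with rfl | rfl
    · exact hab
    · rfl)
  have haB : a ∈ B := (Subalgebra.mem_centralizer_iff ℂ).mpr fun c hc =>
    ((Subalgebra.mem_centralizer_iff ℂ).mp hc a (by simp)).symm
  have hbB : b ∈ B := (Subalgebra.mem_centralizer_iff ℂ).mpr fun c hc =>
    ((Subalgebra.mem_centralizer_iff ℂ).mp hc b (by simp)).symm
  have hBC : ∀ x ∈ B, x ∈ C := by
    intro x hx
    refine (Subalgebra.mem_centralizer_iff ℂ).mpr ?_
    rintro g hg
    rcases hg with rfl | rfl
    · exact (Subalgebra.mem_centralizer_iff ℂ).mp hx g haC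
    · exact (Subalgebra.mem_centralizer_iff ℂ).mp hx g hbC
  have hcomm : ∀ x y : B, x * y = y * x := by
    intro x y
    exact Subtype.ext
      (((Subalgebra.mem_centralizer_iff ℂ).mp x.2 y.1 (hBC y.1 y.2)).symm)
  letI : NormedCommRing B := { (inferInstance : NormedRing B) with mul_comm := hcomm }
  have hBclosed : IsClosed (B : Set A) := by
    have heq : (B : Set A) = ⋂ c ∈ (C : Set A), {x : A | c * x = x * c} := by
      ext x
      simp only [SetLike.mem_coe, Set.mem_iInter, Set.mem_setOf_eq]
      exact ⟨fun hx c hc => (Subalgebra.mem_centralizer_iff ℂ).mp hx c hc,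
        fun hx => (Subalgebra.mem_centralizer_iff ℂ).mpr hx⟩
    rw [heq]
    exact isClosed_biInter fun c _ =>
      isClosed_eq (continuous_const.mul continuous_id) (continuous_id.mul continuous_const)
  letI : CompleteSpace B := hBclosed.completeSpace_coe
  -- B is inverse-closed in A
  have hinv : ∀ x : B, IsUnit (x : A) → IsUnit x := by
    rintro x ⟨u, hu⟩
    have hmem : (↑u⁻¹ : A) ∈ B := by
      refine (Subalgebra.mem_centralizer_iff ℂ).mpr fun c hc => ?_
      have hcx : Commute c (↑u : A) := by
        show c * ↑u = ↑u * c
        rw [hu]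
        exact (Subalgebra.mem_centralizer_iff ℂ).mp x.2 c hc
      exact hcx.units_inv_right
    refine ⟨⟨x, ⟨(↑u⁻¹ : A), hmem⟩, ?_, ?_⟩, rfl⟩
    · exact Subtype.ext (by simp [← hu])
    · exact Subtype.ext (by simp [← hu])
  have hspec : ∀ x : B, spectrum ℂ x ⊆ spectrum ℂ (x : A) := by
    intro x z hz
    by_contra hzA
    rw [spectrum.notMem_iff] at hzA
    rw [spectrum.mem_iff] at hz
    apply hz
    have hco : ((algebraMap ℂ B z - x : B) : A) = algebraMap ℂ A z - (x : A) := by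
      push_cast
      simp
    exact hinv _ (hco ▸ hzA)
  have hd : ¬ IsUnit ((⟨a, haB⟩ : B) - ⟨b, hbB⟩) := by
    intro hu
    apply hne
    have := hu.map B.val
    simpa using this
  obtain ⟨φ, hφ⟩ := WeakDual.CharacterSpace.exists_apply_eq_zero hd
  have h1 : φ ⟨a, haB⟩ = φ ⟨b, hbB⟩ := by
    rw [map_sub] at hφ
    exact sub_eq_zero.mp hφ
  have h2 : φ (⟨a, haB⟩ : B) ∈ spectrum ℂ a := hspec _ (AlgHom.apply_mem_spectrum φ _)
  have h3 : φ (⟨a, haB⟩ : B) ∈ spectrum ℂ b := by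
    rw [h1]; exact hspec _ (AlgHom.apply_mem_spectrum φ _)
  exact hdisj _ h2 h3


set_option maxHeartbeats 1000000 in
set_option synthInstance.maxHeartbeats 400000 in
theorem rosenblum_corollary
    {X Y : Type*} [NormedAddCommGroup X] [NormedSpace ℂ X] [CompleteSpace X]
    [NormedAddCommGroup Y] [NormedSpace ℂ Y] [CompleteSpace Y]
    (S : X →L[ℂ] X) (T : Y →L[ℂ] Y)
    (h : Disjoint (spectrum ℂ S) (spectrum ℂ T)) :
    (∀ Z : Y →L[ℂ] X, ∃! X₀ : Y →L[ℂ] X, S ∘L X₀ - X₀ ∘L T = Z) ∧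
      ∀ W : Y →L[ℂ] X, S ∘L W = W ∘L T → W = 0 := by
  set a : (Y →L[ℂ] X) →L[ℂ] (Y →L[ℂ] X) := compL ℂ Y X X S with ha
  set b : (Y →L[ℂ] X) →L[ℂ] (Y →L[ℂ] X) := (compL ℂ Y Y X).flip T with hb
  have hab : a * b = b * a := by
    ext W y
    simp [a, b, mul_apply, compL_apply, flip_apply, comp_apply]
  -- left multiplication of units is a unit
  have hLa : ∀ M : X →L[ℂ] X, IsUnit M →
      IsUnit (compL ℂ Y X X M) := by
    rintro M ⟨u, rfl⟩
    refine ⟨⟨compL ℂ Y X X u.val, compL ℂ Y X X u.inv, ?_, ?_⟩, rfl⟩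
    · ext W y
      have : u.val (u.inv (W y)) = W y := by
        rw [← ContinuousLinearMap.mul_apply, u.val_inv, ContinuousLinearMap.one_apply]
      simpa [mul_apply, compL_apply, comp_apply] using this
    · ext W y
      have : u.inv (u.val (W y)) = W y := by
        rw [← ContinuousLinearMap.mul_apply, u.inv_val, ContinuousLinearMap.one_apply]
      simpa [mul_apply, compL_apply, comp_apply] using this
  have hRb : ∀ M : Y →L[ℂ] Y, IsUnit M →
      IsUnit ((compL ℂ Y Y X).flip M) := by
    rintro M ⟨u, rfl⟩
    refine ⟨⟨(compL ℂ Y Y X).flip u.val, (compL ℂ Y Y X).flip u.inv, ?_, ?_⟩, rfl⟩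
    · ext W y
      have : u.inv (u.val y) = y := by
        rw [← ContinuousLinearMap.mul_apply, u.inv_val, ContinuousLinearMap.one_apply]
      simp only [ContinuousLinearMap.mul_apply, compL_apply, flip_apply, comp_apply, ContinuousLinearMap.one_apply]
      rw [this]
    · ext W y
      have : u.val (u.inv y) = y := by
        rw [← ContinuousLinearMap.mul_apply, u.val_inv, ContinuousLinearMap.one_apply]
      simp only [ContinuousLinearMap.mul_apply, compL_apply, flip_apply, comp_apply, ContinuousLinearMap.one_apply]
      rw [this]
  have hσa : spectrum ℂ a ⊆ spectrum ℂ S := by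
    intro z hz
    by_contra hzS
    rw [spectrum.notMem_iff] at hzS
    rw [spectrum.mem_iff] at hz
    apply hz
    have key : algebraMap ℂ ((Y →L[ℂ] X) →L[ℂ] (Y →L[ℂ] X)) z - a = compL ℂ Y X X (algebraMap ℂ (X →L[ℂ] X) z - S) := by
      ext W y
      simp [a, Algebra.algebraMap_eq_smul_one, sub_apply, compL_apply, comp_apply,
        smul_apply, one_apply]
    rw [key]
    exact hLa _ hzS
  have hσb : spectrum ℂ b ⊆ spectrum ℂ T := by
    intro z hz
    by_contra hzT
    rw [spectrum.notMem_iff] at hzT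
    rw [spectrum.mem_iff] at hz
    apply hz
    have key : algebraMap ℂ ((Y →L[ℂ] X) →L[ℂ] (Y →L[ℂ] X)) z - b = (compL ℂ Y Y X).flip (algebraMap ℂ (Y →L[ℂ] Y) z - T) := by
      ext W y
      simp [b, Algebra.algebraMap_eq_smul_one, sub_apply, compL_apply, flip_apply, comp_apply,
        smul_apply, one_apply]
    rw [key]
    exact hRb _ hzT
  have hD := commuting_sub_isUnit a b hab fun z hza hzb =>
    (Set.disjoint_left.mp h (hσa hza)) (hσb hzb)
  obtain ⟨u, hu⟩ := hD
  set E : (Y →L[ℂ] X) →L[ℂ] (Y →L[ℂ] X) := ↑u⁻¹ with hE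
  have key : ∀ W : Y →L[ℂ] X, (a - b) W = S ∘L W - W ∘L T := by
    intro W
    simp [a, b, sub_apply, compL_apply, flip_apply]
  have solve : ∀ Z W : Y →L[ℂ] X, S ∘L W - W ∘L T = Z ↔ W = E Z := by
    intro Z W
    constructor
    · intro hW
      have h2 : (E * (a - b)) W = E Z := by
        rw [ContinuousLinearMap.mul_apply, key, hW]
      rwa [hE, ← hu, u.inv_mul, ContinuousLinearMap.one_apply] at h2
    · rintro rfl
      rw [← key, ← ContinuousLinearMap.mul_apply, hE, ← hu, u.mul_inv,
        ContinuousLinearMap.one_apply]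
  constructor
  · intro Z
    exact ⟨E Z, (solve Z _).mpr rfl, fun W hW => (solve Z W).mp hW⟩
  · intro W hW
    have h0 : S ∘L W - W ∘L T = 0 := by rw [hW, sub_self]
    have h3 := (solve 0 W).mp h0
    simpa using h3
end

section
/- Let N be a normal operator on H which is fundamentally reducible: there is a fundamental decomposition H = H₊ [⊕] H₋ with H₊ uniformly positive, H₋ uniformly negative, and both invariant under N. Then N is similar to a normal operator in a Hilbert space; in particular, every point of σ_ap(N) contained in σ(N|H₊) \ σ(N|H₋) is a spectral point of positive type of N. -/
open Filter Topology ContinuousLinearMap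

noncomputable section

variable {H : Type*} [NormedAddCommGroup H] [InnerProductSpace ℂ H] [CompleteSpace H]

/-- `z` belongs to the resolvent set of the restriction of `T` to the range of the
projection `P` (an invariant subspace): `z - T` is invertible in the corner algebra `P L(H) P`. -/
def cornerInv (P T : H →L[ℂ] H) (z : ℂ) : Prop :=
  ∃ S : H →L[ℂ] H, P ∘L S ∘L P = S ∧ (z • (1 : H →L[ℂ] H) - T) ∘L S = P ∧
    S ∘L ((z • (1 : H →L[ℂ] H) - T) ∘L P) = P


theorem fundamentally_reducible_normal (J N : H →L[ℂ] H)
    (hJ : ContinuousLinearMap.adjoint J = J) (hJ2 : J ∘L J = 1)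
    (hN : N ∘L kadj J N = kadj J N ∘L N)
    -- fundamental reducibility: the fundamental decomposition H = H₊ [⊕] H₋,
    -- H₊ = ran((1+J)/2), H₋ = ran((1-J)/2), is N-invariant, i.e. N commutes with J
    (hNJ : N ∘L J = J ∘L N) :
    (N ∘L ContinuousLinearMap.adjoint N = ContinuousLinearMap.adjoint N ∘L N) ∧
      ∀ l ∈ approxSpec N,
        ¬ cornerInv ((2⁻¹ : ℂ) • (1 + J)) N l →
        cornerInv ((2⁻¹ : ℂ) • (1 - J)) N l →
        l ∈ posType J N := by
  -- J commutes with the adjoint of N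
  have hJN' : J ∘L ContinuousLinearMap.adjoint N = ContinuousLinearMap.adjoint N ∘L J := by
    have h := congrArg ContinuousLinearMap.adjoint hNJ
    rw [ContinuousLinearMap.adjoint_comp, ContinuousLinearMap.adjoint_comp, hJ] at h
    exact h
  -- kadj J N is just the adjoint of N
  have hkadj : kadj J N = ContinuousLinearMap.adjoint N := by
    unfold kadj
    rw [← ContinuousLinearMap.comp_assoc, hJN', ContinuousLinearMap.comp_assoc, hJ2]
    ext x; simp
  constructor
  · rw [← hkadj]; exact hN
  intro l hl _ hminus
  set P : H →L[ℂ] H := (2⁻¹ : ℂ) • (1 - J) with hP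
  obtain ⟨S, hS1, hS2, hS3⟩ := hminus
  have hNJ' : ∀ y : H, N (J y) = J (N y) := fun y => by
    have := congrArg (fun (T : H →L[ℂ] H) => T y) hNJ
    simpa using this
  -- N commutes with P
  have hNP : (l • (1 : H →L[ℂ] H) - N) ∘L P = P ∘L (l • (1 : H →L[ℂ] H) - N) := by
    ext x
    simp only [ContinuousLinearMap.comp_apply, ContinuousLinearMap.sub_apply,
      ContinuousLinearMap.smul_apply, ContinuousLinearMap.one_apply, hP,
      ContinuousLinearMap.coe_smul', Pi.smul_apply, ContinuousLinearMap.coe_sub',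
      Pi.sub_apply, map_sub, map_smul]
    rw [hNJ']
    module
  -- J is norm-preserving on inner products
  have hJJ : ∀ y : H, J (J y) = y := by
    intro y
    have := congrArg (fun (T : H →L[ℂ] H) => T y) hJ2
    simpa using this
  have hJnorm : ∀ y : H, ‖J y‖ = ‖y‖ := by
    intro y
    have h1 : (inner ℂ (J y) (J y) : ℂ) = inner ℂ y y := by
      calc (inner ℂ (J y) (J y) : ℂ)
          = inner ℂ (ContinuousLinearMap.adjoint J y) (J y) := by rw [hJ]
        _ = inner ℂ y (J (J y)) := ContinuousLinearMap.adjoint_inner_left J (J y) y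
        _ = inner ℂ y y := by rw [hJJ]
    have h2 : (‖J y‖ : ℝ) ^ 2 = ‖y‖ ^ 2 := by
      have h3 := congrArg (RCLike.re (K := ℂ)) h1
      rwa [@inner_self_eq_norm_sq ℂ, @inner_self_eq_norm_sq ℂ] at h3
    nlinarith [norm_nonneg (J y), norm_nonneg y]
  -- key identity
  have key : ∀ y : H, (inner ℂ (J y) y : ℂ).re = ‖y‖ ^ 2 - 2 * ‖P y‖ ^ 2 := by
    intro y
    have hPy : P y = (2⁻¹ : ℂ) • (y - J y) := by
      simp [hP]
    have hnorm : ‖P y‖ = 2⁻¹ * ‖y - J y‖ := by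
      rw [hPy, norm_smul]; norm_num
    have h := @norm_sub_sq ℂ H _ _ _ y (J y)
    have hre : RCLike.re (inner ℂ y (J y) : ℂ) = RCLike.re (inner ℂ (J y) y : ℂ) :=
      inner_re_symm _ _
    have hid : RCLike.re (inner ℂ (J y) y : ℂ) = (inner ℂ (J y) y : ℂ).re := rfl
    rw [hJnorm y] at h
    rw [hnorm]
    nlinarith [h, hre, hid]
  constructor
  · exact hl
  intro x hx
  -- P (x n) → 0
  have hPx : Tendsto (fun n => P (x n)) atTop (nhds 0) := by
    have heq : ∀ n, P (x n) = (S ∘L P) (l • x n - N (x n)) := by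
      intro n
      have h3 := congrArg (fun (T : H →L[ℂ] H) => T (x n)) hS3
      simp only [ContinuousLinearMap.comp_apply] at h3 ⊢
      rw [← h3]
      congr 1
      have h4 := congrArg (fun (T : H →L[ℂ] H) => T (x n)) hNP
      simp only [ContinuousLinearMap.comp_apply, ContinuousLinearMap.sub_apply,
        ContinuousLinearMap.smul_apply, ContinuousLinearMap.one_apply, map_sub, map_smul] at h4 ⊢
      rw [h4]
    have htend : Tendsto (fun n => l • x n - N (x n)) atTop (nhds 0) := by
      have := hx.2.neg
      simpa [neg_sub] using this
    have h5 := ((S ∘L P).continuous.tendsto 0).comp htend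
    simp only [map_zero] at h5
    simp only [Function.comp_def] at h5
    exact Tendsto.congr (fun n => (heq n).symm) h5
  have hnormPx : Tendsto (fun n => ‖P (x n)‖) atTop (nhds 0) := by
    simpa using hPx.norm
  have hre : Tendsto (fun n => (inner ℂ (J (x n)) (x n) : ℂ).re) atTop (nhds 1) := by
    have heq : ∀ n, (inner ℂ (J (x n)) (x n) : ℂ).re = 1 - 2 * ‖P (x n)‖ ^ 2 := by
      intro n
      rw [key (x n), hx.1 n]
      norm_num
    have : Tendsto (fun n => 1 - 2 * ‖P (x n)‖ ^ 2) atTop (nhds (1 - 2 * 0 ^ 2)) := by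
      exact (tendsto_const_nhds.sub (((hnormPx.pow 2)).const_mul 2))
    simp only [heq]
    simpa using this
  rw [hre.liminf_eq]
  norm_num
end
end
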